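/- Let Γ be a connected strongly regular graph with parameters (n,k,λ,μ), G ≤ Aut(Γ) transitive on vertices and edges, N ⊴ G nontrivial and intransitive, with N-orbits of common size b, such that Γ is an ℓ-multicover of Γ_N. Then for any two non-adjacent vertices X, Y of Γ_N, the number μ'_{X,Y} of common neighbours of X and Y in Γ_N equals bμ/ℓ². In particular this number is independent of the choice of X, Y. -/

import Mathlib

open MulAction

/-- The normal quotient graph: vertices are the `N`-orbits, two distinct orbits
being adjacent when some vertex of one is adjacent in `Γ` to some vertex of the other. -/
def quotientGraph {V G : Type*} (Γ : SimpleGraph V) [Group G] [MulAction G V]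
    (N : Subgroup G) : SimpleGraph (Quotient (orbitRel N V)) where
  Adj X Y := X ≠ Y ∧ ∃ x y : V, Quotient.mk (orbitRel N V) x = X ∧
    Quotient.mk (orbitRel N V) y = Y ∧ Γ.Adj x y
  symm := by
    constructor
    rintro X Y ⟨hne, x, y, hx, hy, hxy⟩
    exact ⟨hne.symm, y, x, hy, hx, hxy.symm⟩
  loopless := by constructor; rintro X ⟨h, -⟩; exact h rfl


open Finset in
private lemma ncard_filter_eq {α : Type*} [Fintype α] (p : α → Prop) [DecidablePred p] :
    {x | p x}.ncard = (Finset.univ.filter p).card := by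
  rw [Set.ncard_eq_toFinset_card', Set.toFinset_setOf]

/-- If `Γ` is a connected vertex- and edge-transitive strongly regular graph, `N ⊴ G`
nontrivial and intransitive with all orbits of size `b`, and `Γ` is an `ℓ`-multicover of
`Γ_N`, then for any two non-adjacent vertices `X ≠ Y` of `Γ_N`, the number `μ'` of their
common neighbours in `Γ_N` satisfies `ℓ² μ' = b μ`, i.e. `μ' = bμ/ℓ²`, independent of
the choice of `X` and `Y`. -/

theorem stmt7 {V G : Type*} [Fintype V] [Group G] [MulAction G V]
    (Γ : SimpleGraph V) [DecidableRel Γ.Adj] (n k l μ b ℓ : ℕ)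
    (hsrg : Γ.IsSRGWith n k l μ) (hconn : Γ.Connected)
    (hact : ∀ (g : G) (u v : V), Γ.Adj (g • u) (g • v) ↔ Γ.Adj u v)
    (hvtrans : MulAction.IsPretransitive G V)
    (hedge : ∀ u v x y : V, Γ.Adj u v → Γ.Adj x y →
      ∃ g : G, (g • u = x ∧ g • v = y) ∨ (g • u = y ∧ g • v = x))
    (N : Subgroup G) (hN : N.Normal) (hNbot : N ≠ ⊥)
    (hNintrans : ¬ MulAction.IsPretransitive N V)
    (hb : ∀ v : V, (MulAction.orbit N v).ncard = b)
    (hmc : ∀ X Y : Quotient (orbitRel N V), (quotientGraph Γ N).Adj X Y →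
      ∀ x : V, Quotient.mk (orbitRel N V) x = X →
        ({y : V | Γ.Adj x y ∧ Quotient.mk (orbitRel N V) y = Y}).ncard = ℓ) :
    ∀ X Y : Quotient (orbitRel N V), X ≠ Y → ¬ (quotientGraph Γ N).Adj X Y →
      ℓ ^ 2 * ({Z : Quotient (orbitRel N V) |
        (quotientGraph Γ N).Adj X Z ∧ (quotientGraph Γ N).Adj Y Z}).ncard = b * μ := by
  classical
  intro X Y hXY hnadj
  obtain ⟨x, hx⟩ := X.exists_rep
  obtain ⟨y₀, hy₀⟩ := Y.exists_rep
  set mk : V → Quotient (orbitRel N V) := Quotient.mk (orbitRel N V) with hmk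
  -- the orbit Y as a finset
  set Yf : Finset V := Finset.univ.filter (fun y => mk y = Y) with hYf
  -- the set of common neighbours of X and Y in the quotient graph, as a finset
  set M : Finset (Quotient (orbitRel N V)) := Finset.univ.filter
    (fun Z => (quotientGraph Γ N).Adj X Z ∧ (quotientGraph Γ N).Adj Y Z) with hM
  -- vertices adjacent to x whose orbit is adjacent to Y
  set S : Finset V := Finset.univ.filter
    (fun z => Γ.Adj x z ∧ (quotientGraph Γ N).Adj (mk z) Y) with hS
  have hYfcard : Yf.card = b := by
    have := hb y₀
    rw [show MulAction.orbit N y₀ = {y | y ∈ MulAction.orbit N y₀} from rfl,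
      ncard_filter_eq] at this
    rw [← this, hYf]
    congr 1
    ext y
    simp only [Finset.mem_filter, Finset.mem_univ, true_and]
    rw [← hy₀, hmk]
    exact Iff.trans Quotient.eq (MulAction.orbitRel_apply)
  -- double counting
  have key : ∑ y ∈ Yf, ∑ z : V, (if Γ.Adj x z ∧ Γ.Adj y z then 1 else 0)
      = ∑ z : V, ∑ y ∈ Yf, (if Γ.Adj x z ∧ Γ.Adj y z then 1 else 0) :=
    Finset.sum_comm
  -- left side is b * μ
  have hleft : ∑ y ∈ Yf, ∑ z : V, (if Γ.Adj x z ∧ Γ.Adj y z then 1 else 0) = b * μ := by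
    have hterm : ∀ y ∈ Yf, ∑ z : V, (if Γ.Adj x z ∧ Γ.Adj y z then 1 else 0) = μ := by
      intro y hy
      have hyY : mk y = Y := by
        rw [hYf] at hy
        exact (Finset.mem_filter.mp hy).2
      have hxy : x ≠ y := by
        rintro rfl
        exact hXY (hx ▸ hyY ▸ rfl)
      have hnadjxy : ¬ Γ.Adj x y := by
        intro h
        exact hnadj ⟨hXY, x, y, hx, hyY, h⟩
      have hcn := hsrg.of_not_adj hxy hnadjxy
      rw [← hcn, ← Set.toFinset_card]
      have : ∑ z : V, (if Γ.Adj x z ∧ Γ.Adj y z then 1 else 0)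
          = (Finset.univ.filter (fun z => Γ.Adj x z ∧ Γ.Adj y z)).card := by
        rw [Finset.card_filter]
      rw [this]
      congr 1
      ext z
      simp [SimpleGraph.mem_commonNeighbors]
    rw [Finset.sum_congr rfl hterm, Finset.sum_const, smul_eq_mul, hYfcard]
  -- right side is ℓ * S.card
  have hright : ∑ z : V, ∑ y ∈ Yf, (if Γ.Adj x z ∧ Γ.Adj y z then 1 else 0)
      = ℓ * S.card := by
    have hterm : ∀ z : V, ∑ y ∈ Yf, (if Γ.Adj x z ∧ Γ.Adj y z then 1 else 0)
        = (if Γ.Adj x z ∧ (quotientGraph Γ N).Adj (mk z) Y then ℓ else 0) := by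
      intro z
      by_cases hxz : Γ.Adj x z
      · by_cases hZY : (quotientGraph Γ N).Adj (mk z) Y
        · have hcount := hmc (mk z) Y hZY z rfl
          rw [ncard_filter_eq] at hcount
          simp only [hxz, true_and, if_pos hZY]
          rw [← hcount, Finset.card_filter, hYf, Finset.sum_filter]
          apply Finset.sum_congr rfl
          intro y _
          by_cases h1 : Γ.Adj z y <;> by_cases h2 : mk y = Y <;>
            simp [h1, h2, SimpleGraph.adj_comm]
        · simp only [hxz, true_and, if_neg hZY]
          apply Finset.sum_eq_zero
          intro y hy
          have hyY : mk y = Y := by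
            rw [hYf] at hy
            exact (Finset.mem_filter.mp hy).2
          rw [if_neg]
          intro hyz
          by_cases hzY : mk z = Y
          · exact hnadj ⟨hXY, x, z, hx, hzY, hxz⟩
          · exact hZY ⟨hzY, z, y, rfl, hyY, hyz.symm⟩
      · simp [hxz]
    calc ∑ z : V, ∑ y ∈ Yf, (if Γ.Adj x z ∧ Γ.Adj y z then 1 else 0)
        = ∑ z : V, (if Γ.Adj x z ∧ (quotientGraph Γ N).Adj (mk z) Y then ℓ else 0) :=
          Finset.sum_congr rfl (fun z _ => hterm z)
      _ = ∑ z ∈ S, ℓ := by rw [hS, Finset.sum_filter]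
      _ = ℓ * S.card := by rw [Finset.sum_const, smul_eq_mul, Nat.mul_comm]
  -- S decomposes over M into fibers of size ℓ
  have hScard : S.card = M.card * ℓ := by
    have hfib : ∀ z ∈ S, mk z ∈ M := by
      intro z hz
      rw [hS] at hz
      obtain ⟨-, hxz, hZY⟩ := Finset.mem_filter.mp hz
      have hne : X ≠ mk z := by
        rintro rfl
        exact hnadj hZY
      rw [hM, Finset.mem_filter]
      exact ⟨Finset.mem_univ _, ⟨hne, x, z, hx, rfl, hxz⟩, hZY.symm⟩
    rw [Finset.card_eq_sum_card_fiberwise hfib]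
    rw [Finset.sum_congr rfl (fun Z hZ => ?_), Finset.sum_const, smul_eq_mul]
    have hZM := (Finset.mem_filter.mp hZ).2
    have hXZ : (quotientGraph Γ N).Adj X Z := hZM.1
    have hcount := hmc X Z hXZ x hx
    rw [ncard_filter_eq] at hcount
    rw [← hcount]
    congr 1
    ext z
    simp only [Finset.mem_filter, Finset.mem_univ, true_and, hS]
    constructor
    · rintro ⟨⟨h1, -⟩, h3⟩; exact ⟨h1, h3⟩
    · rintro ⟨h1, h2⟩
      exact ⟨⟨h1, h2 ▸ hZM.2.symm⟩, h2⟩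
  have hMcard : ({Z : Quotient (orbitRel N V) |
      (quotientGraph Γ N).Adj X Z ∧ (quotientGraph Γ N).Adj Y Z}).ncard = M.card := by
    rw [hM, ncard_filter_eq]
  rw [hMcard]
  rw [hleft, hright, hScard] at key
  rw [key]
  ring
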